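/- Let p have Gotzmann partition (b_1, ..., b_r) and Macaulay expression p(t) = Σ_{i=0}^d [C(t+i, i+1) - C(t+i-e_i, i+1)] with e_0 ≥ e_1 ≥ ... ≥ e_d > 0. Then r = e_0 and the partition (b_1, ..., b_r) is conjugate to the partition (e_1, ..., e_d); in particular, (b_1, ..., b_r) has exactly e_i - e_{i+1} parts equal to i for all 0 ≤ i ≤ d (with e_{d+1} := 0). -/
import Mathlib


/-- The polynomial binomial coefficient `C(t+a, b) ∈ ℚ[t]`. -/
noncomputable def pbinom (a : ℤ) (b : ℕ) : Polynomial ℚ :=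
  (b.factorial : ℚ)⁻¹ • ∏ k ∈ Finset.range b, (Polynomial.X + Polynomial.C ((a : ℚ) - (k : ℚ)))

/-- The Gotzmann sum `Σ_{j=1}^r C(t + b_j - j + 1, b_j)` (here indexed from `j = 0`). -/
noncomputable def gotz (r : ℕ) (b : ℕ → ℕ) : Polynomial ℚ :=
  ∑ j ∈ Finset.range r, pbinom ((b j : ℤ) - (j : ℤ)) (b j)


open Polynomial Finset

lemma pbinom_zero (a : ℤ) : pbinom a 0 = 1 := by
  simp [pbinom]

lemma prod_monic (a : ℤ) (n : ℕ) :
    (∏ k ∈ Finset.range n, (X + C ((a : ℚ) - (k : ℚ)))).Monic :=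
  monic_prod_of_monic _ _ fun k _ => monic_X_add_C _

lemma prod_natDegree (a : ℤ) (n : ℕ) :
    (∏ k ∈ Finset.range n, (X + C ((a : ℚ) - (k : ℚ)))).natDegree = n := by
  rw [natDegree_prod_of_monic _ _ fun k _ => monic_X_add_C _]
  simp only [natDegree_X_add_C]
  simp

lemma pbinom_natDegree_le (a : ℤ) (n : ℕ) : (pbinom a n).natDegree ≤ n := by
  refine le_trans (natDegree_smul_le _ _) ?_
  rw [prod_natDegree]

lemma pbinom_coeff_self (a : ℤ) (n : ℕ) :
    (pbinom a n).coeff n = (n.factorial : ℚ)⁻¹ := by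
  rw [pbinom, coeff_smul]
  have h1 : (∏ k ∈ Finset.range n, (X + C ((a : ℚ) - (k : ℚ)))).coeff n = 1 := by
    have := (prod_monic a n).coeff_natDegree
    rwa [prod_natDegree] at this
  rw [h1]; simp

lemma pbinom_coeff_of_lt (a : ℤ) {m n : ℕ} (h : m < n) : (pbinom a m).coeff n = 0 :=
  coeff_eq_zero_of_natDegree_lt (lt_of_le_of_lt (pbinom_natDegree_le a m) h)

lemma pbinom_pascal (a : ℤ) (n : ℕ) :
    pbinom a (n + 1) - pbinom (a - 1) (n + 1) = pbinom (a - 1) n := by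
  set Q : Polynomial ℚ := ∏ k ∈ Finset.range n, (X + C (((a - 1 : ℤ) : ℚ) - (k : ℚ))) with hQdef
  have hA : (∏ k ∈ Finset.range (n+1), (X + C ((a : ℚ) - (k : ℚ)))) = Q * (X + C (a : ℚ)) := by
    rw [Finset.prod_range_succ' (fun k => X + C ((a:ℚ) - (k:ℚ)))]
    congr 1
    · exact Finset.prod_congr rfl fun k _ => by push_cast; ring_nf
    · simp
  have hB : (∏ k ∈ Finset.range (n+1), (X + C (((a - 1 : ℤ) : ℚ) - (k : ℚ)))) =
      Q * (X + C (((a - 1 : ℤ) : ℚ) - (n : ℚ))) := Finset.prod_range_succ _ _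
  rw [pbinom, pbinom, pbinom, hA, hB, ← smul_sub, ← mul_sub]
  have h2 : (X + C ((a : ℚ))) - (X + C (((a - 1 : ℤ) : ℚ) - (n : ℚ))) = C ((n : ℚ) + 1) := by
    have h3 : (X + C ((a : ℚ))) - (X + C (((a - 1 : ℤ) : ℚ) - (n : ℚ)))
        = C ((a : ℚ)) - C (((a - 1 : ℤ) : ℚ) - (n : ℚ)) := by ring
    rw [h3, ← C_sub]; congr 1; push_cast; ring
  rw [h2, ← hQdef, mul_comm Q, smul_eq_C_mul, smul_eq_C_mul, ← mul_assoc, ← C_mul]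
  congr 2
  have hne : ((n.factorial : ℚ)) ≠ 0 := Nat.cast_ne_zero.mpr n.factorial_ne_zero
  rw [Nat.factorial_succ]
  push_cast
  field_simp

lemma pbinom_telescope (i : ℕ) (m : ℕ) :
    pbinom (i : ℤ) (i + 1) - pbinom ((i : ℤ) - (m : ℤ)) (i + 1)
      = ∑ j ∈ Finset.range m, pbinom ((i : ℤ) - 1 - (j : ℤ)) i := by
  induction m with
  | zero => simp
  | succ m IH =>
    rw [Finset.sum_range_succ, ← IH]
    have h1 : ((i : ℤ) - ((m : ℤ) + 1)) = ((i : ℤ) - m) - 1 := by ring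
    have h2 := pbinom_pascal ((i : ℤ) - m) i
    push_cast
    rw [h1]
    have h3 : (i : ℤ) - 1 - (m : ℤ) = ((i : ℤ) - m) - 1 := by ring
    rw [h3, ← h2]
    ring

noncomputable def gotzS (s r : ℕ) (b : ℕ → ℕ) : Polynomial ℚ :=
  ∑ j ∈ Finset.range r, pbinom ((b j : ℤ) - (j : ℤ) - (s : ℤ)) (b j)

lemma gotz_eq (r : ℕ) (b : ℕ → ℕ) : gotz r b = gotzS 0 r b := by
  unfold gotz gotzS
  exact Finset.sum_congr rfl fun j _ => by norm_num

lemma gotzS_coeff (s r n : ℕ) (b : ℕ → ℕ) (hbn : ∀ j, j < r → b j ≤ n) :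
    (gotzS s r b).coeff n
      = (((Finset.range r).filter (fun j => b j = n)).card : ℚ) * (n.factorial : ℚ)⁻¹ := by
  rw [gotzS, Polynomial.finset_sum_coeff]
  have : ∀ j ∈ Finset.range r,
      (pbinom ((b j : ℤ) - (j : ℤ) - (s : ℤ)) (b j)).coeff n
        = if b j = n then (n.factorial : ℚ)⁻¹ else 0 := by
    intro j hj
    rcases eq_or_lt_of_le (hbn j (Finset.mem_range.mp hj)) with h | h
    · rw [if_pos h, h, pbinom_coeff_self]
    · rw [if_neg (Nat.ne_of_lt h), pbinom_coeff_of_lt _ h]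
  rw [Finset.sum_congr rfl this, ← Finset.sum_filter, Finset.sum_const, nsmul_eq_mul]

lemma downward_closed_mem {S : Finset ℕ} (hS : ∀ j ∈ S, ∀ k, k ≤ j → k ∈ S) :
    ∀ j, j ∈ S ↔ j < S.card := by
  intro j
  constructor
  · intro hj
    have hsub : Finset.range (j + 1) ⊆ S := fun k hk =>
      hS j hj k (Nat.lt_succ_iff.mp (Finset.mem_range.mp hk))
    have := Finset.card_le_card hsub
    rw [Finset.card_range] at this
    omega
  · intro hj
    by_contra hjS
    have hsub : S ⊆ Finset.range j := by
      intro x hx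
      rw [Finset.mem_range]
      by_contra hxj
      exact hjS (hS x hx j (by omega))
    have := Finset.card_le_card hsub
    rw [Finset.card_range] at this
    omega

lemma gotzS_top_le {s r r' : ℕ} {b c : ℕ → ℕ}
    (hb : ∀ i j : ℕ, i ≤ j → j < r → b j ≤ b i)
    (hc : ∀ i j : ℕ, i ≤ j → j < r' → c j ≤ c i)
    (hr : 0 < r) (hr' : 0 < r')
    (h : gotzS s r b = gotzS s r' c) : b 0 ≤ c 0 := by
  by_contra hlt
  push_neg at hlt
  have h1 := gotzS_coeff s r (b 0) b (fun j hj => hb 0 j (Nat.zero_le _) hj)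
  have h2 := gotzS_coeff s r' (b 0) c (fun j hj => le_trans (hc 0 j (Nat.zero_le _) hj) (le_of_lt hlt))
  have hfil : (Finset.range r').filter (fun j => c j = b 0) = ∅ := by
    apply Finset.filter_false_of_mem
    intro j hj
    have := hc 0 j (Nat.zero_le _) (Finset.mem_range.mp hj)
    omega
  rw [hfil] at h2
  have hmem : 0 ∈ (Finset.range r).filter (fun j => b j = b 0) := by
    simp [hr]
  have hpos : 0 < ((Finset.range r).filter (fun j => b j = b 0)).card :=
    Finset.card_pos.mpr ⟨0, hmem⟩
  have key : ((((Finset.range r).filter (fun j => b j = b 0)).card : ℚ))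
      * ((b 0).factorial : ℚ)⁻¹ = 0 := by
    rw [← h1, h, h2]; simp
  have hinv : (((b 0).factorial : ℚ))⁻¹ ≠ 0 :=
    inv_ne_zero (Nat.cast_ne_zero.mpr (b 0).factorial_ne_zero)
  rcases mul_eq_zero.mp key with hk | hk
  · exact absurd (Nat.cast_eq_zero.mp hk) (by omega)
  · exact hinv hk

lemma gotzS_split (s r m : ℕ) (b : ℕ → ℕ) (hm : m ≤ r) (n : ℕ)
    (hbm : ∀ j, j < m → b j = n) :
    gotzS s r b = (∑ j ∈ Finset.range m, pbinom ((n : ℤ) - (j : ℤ) - (s : ℤ)) n)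
      + gotzS (s + m) (r - m) (fun j => b (m + j)) := by
  have hr : r = m + (r - m) := by omega
  conv_lhs => rw [gotzS, hr]
  rw [Finset.sum_range_add]
  congr 1
  · exact Finset.sum_congr rfl fun j hj => by
      rw [hbm j (Finset.mem_range.mp hj)]
  · rw [gotzS]
    refine Finset.sum_congr rfl fun j hj => ?_
    congr 1
    push_cast
    ring

lemma gotzS_inj : ∀ (r s r' : ℕ) (b c : ℕ → ℕ),
    (∀ i j : ℕ, i ≤ j → j < r → b j ≤ b i) →
    (∀ i j : ℕ, i ≤ j → j < r' → c j ≤ c i) →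
    gotzS s r b = gotzS s r' c → r = r' ∧ ∀ j < r, b j = c j := by
  intro r
  induction r using Nat.strong_induction_on with
  | _ r IH =>
    intro s r' b c hb hc h
    rcases Nat.eq_zero_or_pos r with hr0 | hrpos
    · subst hr0
      refine ⟨?_, fun j hj => absurd hj (by omega)⟩
      by_contra hr'
      have hr'pos : 0 < r' := Nat.pos_of_ne_zero (fun hh => hr' hh.symm)
      have h0 : gotzS s 0 b = 0 := by simp [gotzS]
      have h1 := gotzS_coeff s r' (c 0) c (fun j hj => hc 0 j (Nat.zero_le _) hj)
      rw [← h, h0] at h1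
      have hmem : 0 ∈ (Finset.range r').filter (fun j => c j = c 0) := by simp [hr'pos]
      have hpos : 0 < ((Finset.range r').filter (fun j => c j = c 0)).card :=
        Finset.card_pos.mpr ⟨0, hmem⟩
      have hinv : (((c 0).factorial : ℚ))⁻¹ ≠ 0 :=
        inv_ne_zero (Nat.cast_ne_zero.mpr (c 0).factorial_ne_zero)
      rcases mul_eq_zero.mp h1.symm with hk | hk
      · exact absurd (Nat.cast_eq_zero.mp hk) (by omega)
      · exact hinv hk
    · -- r > 0 ; first show r' > 0
      have hr'pos : 0 < r' := by
        by_contra hr'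
        have hr'0 : r' = 0 := by omega
        subst hr'0
        have h0 : gotzS s 0 c = 0 := by simp [gotzS]
        have h1 := gotzS_coeff s r (b 0) b (fun j hj => hb 0 j (Nat.zero_le _) hj)
        rw [h, h0] at h1
        have hmem : 0 ∈ (Finset.range r).filter (fun j => b j = b 0) := by simp [hrpos]
        have hpos : 0 < ((Finset.range r).filter (fun j => b j = b 0)).card :=
          Finset.card_pos.mpr ⟨0, hmem⟩
        have hinv : (((b 0).factorial : ℚ))⁻¹ ≠ 0 :=
          inv_ne_zero (Nat.cast_ne_zero.mpr (b 0).factorial_ne_zero)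
        rcases mul_eq_zero.mp h1.symm with hk | hk
        · exact absurd (Nat.cast_eq_zero.mp hk) (by omega)
        · exact hinv hk
      -- top degrees agree
      have hn : b 0 = c 0 :=
        le_antisymm (gotzS_top_le hb hc hrpos hr'pos h) (gotzS_top_le hc hb hr'pos hrpos h.symm)
      set n := b 0 with hndef
      -- multiplicities agree
      set S := (Finset.range r).filter (fun j => b j = n) with hSdef
      set T := (Finset.range r').filter (fun j => c j = n) with hTdef
      have hcoeffb := gotzS_coeff s r n b (fun j hj => hb 0 j (Nat.zero_le _) hj)
      have hcoeffc := gotzS_coeff s r' n c (fun j hj => hn ▸ hc 0 j (Nat.zero_le _) hj)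
      have hm : S.card = T.card := by
        have : (S.card : ℚ) * ((n.factorial : ℚ))⁻¹ = (T.card : ℚ) * ((n.factorial : ℚ))⁻¹ := by
          rw [← hcoeffb, ← hcoeffc, h]
        have hinv : ((n.factorial : ℚ))⁻¹ ≠ 0 :=
          inv_ne_zero (Nat.cast_ne_zero.mpr n.factorial_ne_zero)
        exact_mod_cast mul_right_cancel₀ hinv this
      set m := S.card with hmdef
      have hSm : ∀ j, j ∈ S ↔ j < m := by
        apply downward_closed_mem
        intro j hj k hk
        rw [hSdef, Finset.mem_filter, Finset.mem_range] at hj ⊢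
        refine ⟨by omega, ?_⟩
        have h1 := hb 0 k (Nat.zero_le _) (by omega)
        have h2 := hb k j hk (by omega)
        omega
      have hTm : ∀ j, j ∈ T ↔ j < m := by
        rw [hm]
        apply downward_closed_mem
        intro j hj k hk
        rw [hTdef, Finset.mem_filter, Finset.mem_range] at hj ⊢
        refine ⟨by omega, ?_⟩
        have h1 := hc 0 k (Nat.zero_le _) (by omega)
        have h2 := hc k j hk (by omega)
        omega
      have hbm : ∀ j, j < m → b j = n := fun j hj =>
        (Finset.mem_filter.mp ((hSm j).mpr hj)).2
      have hcm : ∀ j, j < m → c j = n := fun j hj =>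
        (Finset.mem_filter.mp ((hTm j).mpr hj)).2
      have hm1 : 0 < m := Finset.card_pos.mpr ⟨0, by
        rw [hSdef, Finset.mem_filter, Finset.mem_range]; exact ⟨hrpos, rfl⟩⟩
      have hmr : m ≤ r := by
        have := Finset.card_filter_le (Finset.range r) (fun j => b j = n)
        rw [← hSdef, Finset.card_range] at this; omega
      have hmr' : m ≤ r' := by
        have := Finset.card_filter_le (Finset.range r') (fun j => c j = n)
        rw [← hTdef, Finset.card_range] at this; omega
      have hsplitb := gotzS_split s r m b hmr n hbm
      have hsplitc := gotzS_split s r' m c hmr' n hcm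
      rw [hsplitb, hsplitc] at h
      have h2 := add_left_cancel h
      have IH2 := IH (r - m) (by omega) (s + m) (r' - m) _ _
        (fun i j hij hj => hb (m + i) (m + j) (by omega) (by omega))
        (fun i j hij hj => hc (m + i) (m + j) (by omega) (by omega)) h2
      refine ⟨by omega, fun j hj => ?_⟩
      rcases Nat.lt_or_ge j m with hjm | hjm
      · rw [hbm j hjm, hcm j hjm]
      · have := IH2.2 (j - m) (by omega)
        have hje : m + (j - m) = j := by omega
        rwa [hje] at this

def conj (e : ℕ → ℕ) (d : ℕ) (j : ℕ) : ℕ :=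
  ((Finset.Icc 1 d).filter (fun k => j < e k)).card

lemma conj_succ (e : ℕ → ℕ) (d j : ℕ) :
    conj e (d + 1) j = conj e d j + (if j < e (d + 1) then 1 else 0) := by
  unfold conj
  have hIcc : Finset.Icc 1 (d + 1) = insert (d + 1) (Finset.Icc 1 d) := by
    ext k; simp [Finset.mem_Icc, Finset.mem_insert]; omega
  rw [hIcc, Finset.filter_insert]
  by_cases hj : j < e (d + 1)
  · rw [if_pos hj, if_pos hj, Finset.card_insert_of_notMem (by
      simp [Finset.mem_filter, Finset.mem_Icc])]
  · rw [if_neg hj, if_neg hj]; omega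

lemma conj_anti (e : ℕ → ℕ) (d : ℕ) {i j : ℕ} (hij : i ≤ j) :
    conj e d j ≤ conj e d i := by
  apply Finset.card_le_card
  intro k hk
  rw [Finset.mem_filter] at hk ⊢
  exact ⟨hk.1, by omega⟩

lemma conj_top (e : ℕ → ℕ) (d : ℕ) (he : ∀ i j : ℕ, i ≤ j → j ≤ d → e j ≤ e i)
    {j : ℕ} (hj : j < e d) : conj e d j = d := by
  unfold conj
  rw [Finset.filter_true_of_mem (fun k hk => by
    have := he k d (Finset.mem_Icc.mp hk).2 le_rfl
    omega)]
  rw [Nat.card_Icc]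
  omega

lemma filter_lt_range (m n : ℕ) (h : m ≤ n) :
    (Finset.range n).filter (fun j => j < m) = Finset.range m := by
  ext j; simp [Finset.mem_filter, Finset.mem_range]; omega

lemma macaulay_eq (e : ℕ → ℕ) : ∀ d : ℕ, (∀ i j : ℕ, i ≤ j → j ≤ d → e j ≤ e i) →
    (∑ i ∈ Finset.range (d + 1),
        (pbinom (i : ℤ) (i + 1) - pbinom ((i : ℤ) - (e i : ℤ)) (i + 1)))
      = gotz (e 0) (conj e d) := by
  intro d
  induction d with
  | zero =>
    intro _
    rw [Finset.sum_range_one]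
    have h1 : pbinom (0 : ℤ) (0 + 1) - pbinom ((0 : ℤ) - (e 0 : ℤ)) (0 + 1)
        = ∑ j ∈ Finset.range (e 0), pbinom ((0 : ℤ) - 1 - (j : ℤ)) 0 := by
      have := pbinom_telescope 0 (e 0)
      exact_mod_cast this
    push_cast
    rw [h1, gotz]
    refine Finset.sum_congr rfl fun j hj => ?_
    have hc : conj e 0 j = 0 := by unfold conj; simp
    rw [hc, pbinom_zero, pbinom_zero]
  | succ d IH =>
    intro he
    have IH' := IH (fun i j hij hj => he i j hij (by omega))
    rw [Finset.sum_range_succ, IH']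
    have htel : pbinom ((d + 1 : ℕ) : ℤ) ((d + 1) + 1)
        - pbinom (((d + 1 : ℕ) : ℤ) - (e (d + 1) : ℤ)) ((d + 1) + 1)
        = ∑ j ∈ Finset.range (e (d + 1)), pbinom ((d : ℤ) - (j : ℤ)) (d + 1) := by
      rw [pbinom_telescope (d + 1) (e (d + 1))]
      refine Finset.sum_congr rfl fun j hj => ?_
      congr 1
      push_cast; ring
    push_cast at htel ⊢
    rw [htel]
    rw [gotz, gotz]
    have key : ∀ j ∈ Finset.range (e 0),
        pbinom ((conj e (d + 1) j : ℤ) - (j : ℤ)) (conj e (d + 1) j)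
          = pbinom ((conj e d j : ℤ) - (j : ℤ)) (conj e d j)
            + (if j < e (d + 1) then pbinom ((d : ℤ) - (j : ℤ)) (d + 1) else 0) := by
      intro j hj
      by_cases hjd : j < e (d + 1)
      · have hcd : conj e d j = d := by
          apply conj_top e d (fun i j hij hjle => he i j hij (by omega))
          have := he d (d + 1) (by omega) le_rfl
          omega
        have hcd1 : conj e (d + 1) j = d + 1 := by
          rw [conj_succ, hcd, if_pos hjd]
        rw [hcd, hcd1, if_pos hjd]
        have hp := pbinom_pascal ((d : ℤ) + 1 - (j : ℤ)) d
        have h1 : (d : ℤ) + 1 - (j : ℤ) - 1 = (d : ℤ) - (j : ℤ) := by ring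
        rw [h1] at hp
        have h2 : ((d + 1 : ℕ) : ℤ) - (j : ℤ) = (d : ℤ) + 1 - (j : ℤ) := by push_cast; ring
        rw [h2]
        linear_combination hp
      · have hcd1 : conj e (d + 1) j = conj e d j := by
          rw [conj_succ, if_neg hjd, Nat.add_zero]
        rw [hcd1, if_neg hjd, add_zero]
    rw [Finset.sum_congr rfl key, Finset.sum_add_distrib]
    congr 1
    rw [← Finset.sum_filter, filter_lt_range _ _ (he 0 (d + 1) (by omega) le_rfl)]

lemma conj_count (e : ℕ → ℕ) (d : ℕ) (he : ∀ i j : ℕ, i ≤ j → j ≤ d → e j ≤ e i)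
    (i : ℕ) (hi : i ≤ d) :
    (Finset.range (e 0)).filter (fun j => conj e d j = i)
      = Finset.Ico (if i < d then e (i + 1) else 0) (e i) := by
  ext j
  simp only [Finset.mem_filter, Finset.mem_range, Finset.mem_Ico]
  constructor
  · rintro ⟨hj0, hcj⟩
    have hji : j < e i := by
      by_contra hge
      push_neg at hge
      rcases Nat.eq_zero_or_pos i with hi0 | hipos
      · subst hi0; omega
      · have hsub : (Finset.Icc 1 d).filter (fun k => j < e k) ⊆ Finset.Icc 1 (i - 1) := by
          intro k hk
          rw [Finset.mem_filter, Finset.mem_Icc] at hk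
          rw [Finset.mem_Icc]
          refine ⟨hk.1.1, ?_⟩
          by_contra hki
          have : e k ≤ e i := he i k (by omega) hk.1.2
          omega
        have hcard := Finset.card_le_card hsub
        rw [Nat.card_Icc] at hcard
        unfold conj at hcj
        omega
    refine ⟨?_, hji⟩
    by_cases hid : i < d
    · rw [if_pos hid]
      by_contra hlt
      push_neg at hlt
      have hsub : Finset.Icc 1 (i + 1) ⊆ (Finset.Icc 1 d).filter (fun k => j < e k) := by
        intro k hk
        rw [Finset.mem_Icc] at hk
        rw [Finset.mem_filter, Finset.mem_Icc]
        refine ⟨⟨hk.1, by omega⟩, ?_⟩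
        have : e (i + 1) ≤ e k := he k (i + 1) (by omega) (by omega)
        omega
      have hcard := Finset.card_le_card hsub
      rw [Nat.card_Icc] at hcard
      unfold conj at hcj
      omega
    · rw [if_neg hid]; omega
  · rintro ⟨h1, h2⟩
    have hj0 : j < e 0 := lt_of_lt_of_le h2 (he 0 i (Nat.zero_le _) hi)
    refine ⟨hj0, ?_⟩
    have hfe : (Finset.Icc 1 d).filter (fun k => j < e k) = Finset.Icc 1 i := by
      ext k
      rw [Finset.mem_filter, Finset.mem_Icc, Finset.mem_Icc]
      constructor
      · rintro ⟨⟨hk1, hkd⟩, hjk⟩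
        refine ⟨hk1, ?_⟩
        by_contra hki
        have hid : i < d := by omega
        rw [if_pos hid] at h1
        have : e k ≤ e (i + 1) := he (i + 1) k (by omega) hkd
        omega
      · rintro ⟨hk1, hki⟩
        refine ⟨⟨hk1, by omega⟩, ?_⟩
        have : e i ≤ e k := he k i hki (by omega)
        omega
    unfold conj
    rw [hfe, Nat.card_Icc]
    omega

/-- If `p` has Gotzmann partition `(b_1, …, b_r)` and Macaulay expression with
`e_0 ≥ ⋯ ≥ e_d > 0`, then `r = e_0` and `(b_1, …, b_r)` is conjugate to
`(e_1, …, e_d)`: it has exactly `e_i - e_{i+1}` parts equal to `i`, for `0 ≤ i ≤ d`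
(with `e_{d+1} := 0`). -/
theorem gotzmann_macaulay_conjugate (r d : ℕ) (b e : ℕ → ℕ)
    (hb : ∀ i j : ℕ, i ≤ j → j < r → b j ≤ b i)
    (he : ∀ i j : ℕ, i ≤ j → j ≤ d → e j ≤ e i)
    (hepos : ∀ i ≤ d, 0 < e i)
    (h : gotz r b =
      ∑ i ∈ Finset.range (d + 1), (pbinom (i : ℤ) (i + 1) - pbinom ((i : ℤ) - (e i : ℤ)) (i + 1))) :
    r = e 0 ∧ ∀ i ≤ d,
      ((Finset.range r).filter (fun j => b j = i)).card = e i - (if i < d then e (i + 1) else 0) := by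

  rw [macaulay_eq e d he, gotz_eq, gotz_eq] at h
  have hconj : ∀ i j : ℕ, i ≤ j → j < e 0 → conj e d j ≤ conj e d i :=
    fun i j hij _ => conj_anti e d hij
  obtain ⟨hre, hbj⟩ := gotzS_inj r 0 (e 0) b (conj e d) hb hconj h
  refine ⟨hre, fun i hi => ?_⟩
  have hfil : (Finset.range r).filter (fun j => b j = i)
      = (Finset.range (e 0)).filter (fun j => conj e d j = i) := by
    rw [← hre]
    apply Finset.filter_congr
    intro j hj
    rw [hbj j (Finset.mem_range.mp hj)]
  rw [hfil, conj_count e d he i hi, Nat.card_Ico]
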